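/- Let G be a 2-connected multigraph having a vertex s of degree at least 3, and let c be any other vertex. Then 2(c - s) is not firing equivalent to the zero divisor; equivalently, the class of c - s in the sandpile group Pic^0(G) does not have order dividing 2. -/

import Mathlib

open Finset

noncomputable section
open scoped Classical

/-- A finite multigraph without loops: each edge has an unordered pair of
distinct endpoints. -/
structure Multigraph (V E : Type) where
  ends : E → Sym2 V
  loopless : ∀ e, ¬ (ends e).IsDiag

/-- A ribbon structure: for each vertex, a "next edge" map describing the
cyclic ordering of the edges incident to that vertex. -/
structure RibbonStruct (V E : Type) where
  next : V → E → E

/-- The group of degree-zero divisors on the vertex set `V`. -/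
def Div0 (V : Type) [Fintype V] : AddSubgroup (V → ℤ) where
  carrier := {D | ∑ v, D v = 0}
  add_mem' := by
    intro a b ha hb
    simp only [Set.mem_setOf_eq, Pi.add_apply, Finset.sum_add_distrib] at *
    omega
  zero_mem' := by simp
  neg_mem' := by
    intro a ha
    simp only [Set.mem_setOf_eq, Pi.neg_apply, Finset.sum_neg_distrib] at *
    omega

/-- The divisor `c - s`. -/
def chipDiv {V : Type} [DecidableEq V] (c s : V) : V → ℤ :=
  fun v => (if v = c then 1 else 0) - (if v = s then 1 else 0)

namespace Multigraph

variable {V E : Type} [Fintype V] [Fintype E] [DecidableEq V] [DecidableEq E]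

/-- Two vertices are adjacent if they are the two endpoints of some edge. -/
def Adj (G : Multigraph V E) (x y : V) : Prop := ∃ e : E, G.ends e = s(x, y)

/-- A multigraph is connected if any two vertices are joined by a walk. -/
def Connected (G : Multigraph V E) : Prop := ∀ x y : V, Relation.ReflTransGen G.Adj x y

/-- Adjacency using only edges from the set `T`. -/
def AdjOn (G : Multigraph V E) (T : Finset E) (x y : V) : Prop := ∃ e ∈ T, G.ends e = s(x, y)

/-- Reachability using only edges from the set `T`. -/
def ReachOn (G : Multigraph V E) (T : Finset E) (x y : V) : Prop :=
  Relation.ReflTransGen (G.AdjOn T) x y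

/-- A spanning tree: a spanning connected edge set of the correct cardinality. -/
def IsSpanningTree (G : Multigraph V E) (T : Finset E) : Prop :=
  (∀ x y : V, G.ReachOn T x y) ∧ T.card = Fintype.card V - 1

/-- The degree of a vertex: the number of incident edges. -/
def degree (G : Multigraph V E) (v : V) : ℕ := (univ.filter fun e => v ∈ G.ends e).card

/-- The number of edges of `T` incident to `v`. -/
def treeDegree (G : Multigraph V E) (T : Finset E) (v : V) : ℕ :=
  (T.filter fun e => v ∈ G.ends e).card

/-- A leaf vertex of `T`: incident to exactly one edge of `T`. -/
def IsLeafVertex (G : Multigraph V E) (T : Finset E) (v : V) : Prop := G.treeDegree T v = 1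

/-- A leaf edge of `T`: an edge of `T` incident to a leaf vertex. -/
def IsLeafEdge (G : Multigraph V E) (T : Finset E) (e : E) : Prop :=
  e ∈ T ∧ ∃ v, v ∈ G.ends e ∧ G.IsLeafVertex T v

/-- Adjacency within `T` avoiding the vertex `x`. -/
def AdjOnAvoid (G : Multigraph V E) (T : Finset E) (x : V) (a b : V) : Prop :=
  G.AdjOn T a b ∧ a ≠ x ∧ b ≠ x

/-- "The path in `T` from `a` to `r` passes through `y`": `a` cannot reach `r`
within `T` while avoiding the vertex `y`. -/
def PathThrough (G : Multigraph V E) (T : Finset E) (r a y : V) : Prop :=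
  ¬ Relation.ReflTransGen (G.AdjOnAvoid T y) a r

/-- Adjacency in `G` avoiding the vertex `x`. -/
def AdjAvoid (G : Multigraph V E) (x : V) (a b : V) : Prop := G.Adj a b ∧ a ≠ x ∧ b ≠ x

/-- 2-connected: connected and with no cut vertices. -/
def TwoConnected (G : Multigraph V E) : Prop :=
  G.Connected ∧ ∀ x a b : V, a ≠ x → b ≠ x →
    Relation.ReflTransGen (G.AdjAvoid x) a b

/-- The row of the Laplacian matrix of `G` corresponding to the vertex `v`
(the divisor obtained by "firing" the vertex `v`, negated). -/
def lapRow (G : Multigraph V E) (v : V) : V → ℤ := fun w =>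
  if w = v then (G.degree v : ℤ) else -((univ.filter fun e => G.ends e = s(v, w)).card : ℤ)

/-- The subgroup of divisors generated by the rows of the Laplacian, i.e. the
integer image of the Laplacian. -/
def LapSubgroup (G : Multigraph V E) : AddSubgroup (V → ℤ) :=
  AddSubgroup.closure (Set.range G.lapRow)

/-- Two divisors are firing equivalent when their difference lies in the
integer image of the Laplacian. -/
def FiringEquiv (G : Multigraph V E) (D D' : V → ℤ) : Prop := D - D' ∈ G.LapSubgroup

/-- The sandpile group (Picard group) `Pic⁰(G)`:
degree-zero divisors modulo the image of the Laplacian. -/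
def Pic0 (G : Multigraph V E) : Type :=
  Div0 V ⧸ ((G.LapSubgroup).addSubgroupOf (Div0 V))

instance (G : Multigraph V E) : AddCommGroup G.Pic0 :=
  QuotientAddGroup.Quotient.addCommGroup _

/-- The class in `Pic⁰(G)` of a degree-zero divisor. -/
def picClass (G : Multigraph V E) (D : V → ℤ) (hD : D ∈ Div0 V) : G.Pic0 :=
  QuotientAddGroup.mk ⟨D, hD⟩

/-- `cfg` is the rotor configuration of the tree `T` with sink `s` (each
non-sink vertex carries the first edge of `T` on its path to `s`). -/
def IsRotorCfg (G : Multigraph V E) (s : V) (T : Finset E) (cfg : V → E) : Prop :=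
  ∀ v, v ≠ s → cfg v ∈ T ∧ v ∈ G.ends (cfg v) ∧ ¬ G.ReachOn (T.erase (cfg v)) v s

/-- One step along the rotors of `cfg` (with sink `s`):
from `a ≠ s` across the rotor at `a` to its other endpoint `b`. -/
def RotorStep (G : Multigraph V E) (s : V) (cfg : V → E) (a b : V) : Prop :=
  a ≠ s ∧ G.ends (cfg a) = s(a, b)

/-- A rotor configuration is acyclic: following rotors never returns to a
starting vertex. -/
def RotorAcyclic (G : Multigraph V E) (s : V) (cfg : V → E) : Prop :=
  ∀ a : V, ¬ Relation.TransGen (G.RotorStep s cfg) a a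

/-- One step of the single-chip rotor-routing process: the state is a pair
(rotor configuration, chip position); the rotor at the chip's position is
rotated one step in the cyclic order `χ`, and the chip then moves across the
new rotor. -/
def RRStep (G : Multigraph V E) (χ : RibbonStruct V E) (p q : (V → E) × V) : Prop :=
  q.1 = Function.update p.1 p.2 (χ.next p.2 (p.1 p.2)) ∧ G.ends (q.1 p.2) = s(p.2, q.2)

/-- A run of length `n` of the rotor-routing algorithm with sink `s`. -/
def IsRun (G : Multigraph V E) (χ : RibbonStruct V E) (s : V)
    (σ : ℕ → (V → E) × V) (n : ℕ) : Prop :=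
  ∀ i, i < n → (σ i).2 ≠ s ∧ G.RRStep χ (σ i) (σ i.succ)

/-- At step `i` of the run `σ`, the chip crosses the edge `e` from `u` to `w`. -/
def Crosses (G : Multigraph V E) (σ : ℕ → (V → E) × V) (i : ℕ) (e : E) (u w : V) : Prop :=
  (σ i).2 = u ∧ (σ (i + 1)).2 = w ∧ (σ (i + 1)).1 u = e ∧ G.ends e = s(u, w)

/-- A dart of `G`: an edge together with a chosen head. -/
def Dart (G : Multigraph V E) : Type := {p : E × V // p.2 ∈ G.ends p.1}

/-- The "next dart along a face" relation determined by the ribbon structure. -/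
def FaceRel (G : Multigraph V E) (χ : RibbonStruct V E) (a b : G.Dart) : Prop :=
  b.1.1 = χ.next a.1.2 a.1.1 ∧ G.ends b.1.1 = s(a.1.2, b.1.2)

/-- The number of faces of the ribbon graph `(G, χ)`: the number of orbits of
the face map on darts. -/
def numFaces (G : Multigraph V E) (χ : RibbonStruct V E) : ℕ :=
  Nat.card (Quot (G.FaceRel χ))

end Multigraph

/-- The axioms making `χ` an honest ribbon structure on `G`: at each vertex,
`next` is a bijection preserving the incident edges and acting transitively
(i.e. cyclically) on them. -/
def RibbonStruct.IsRibbon {V E : Type} [Fintype V] [Fintype E]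
    (χ : RibbonStruct V E) (G : Multigraph V E) : Prop :=
  (∀ v : V, Function.Bijective (χ.next v)) ∧
  (∀ v e, v ∈ G.ends e → v ∈ G.ends (χ.next v e)) ∧
  (∀ v e f, v ∈ G.ends e → v ∈ G.ends f → ∃ m : ℕ, (χ.next v)^[m] e = f)

/-- A plane graph: a connected ribbon graph of genus 0 (Euler's formula). -/
def Multigraph.IsPlane {V E : Type} [Fintype V] [Fintype E] [DecidableEq V] [DecidableEq E]
    (G : Multigraph V E) (χ : RibbonStruct V E) : Prop :=
  G.Connected ∧ χ.IsRibbon G ∧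
    Fintype.card V + G.numFaces χ = Fintype.card E + 2

/-- An isomorphism of ribbon graphs: a pair of bijections on vertices and
edges preserving incidence and the cyclic orderings. -/
def IsRibbonIso {V E V' E' : Type}
    (G : Multigraph V E) (χ : RibbonStruct V E)
    (G' : Multigraph V' E') (χ' : RibbonStruct V' E')
    (φV : V ≃ V') (φE : E ≃ E') : Prop :=
  (∀ e, G'.ends (φE e) = (G.ends e).map φV) ∧
  ∀ v e, v ∈ G.ends e → φE (χ.next v e) = χ'.next (φV v) (φE e)



namespace SandpileAux
variable {V E : Type} [Fintype V] [Fintype E] [DecidableEq V] [DecidableEq E]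

/-- The quadratic form `(g x - g y) * (f x - f y)` on an unordered pair. -/
def quadForm (g f : V → ℤ) : Sym2 V → ℤ :=
  Sym2.lift ⟨fun x y => (g x - g y) * (f x - f y), fun x y => by ring⟩

@[simp] lemma quadForm_mk (g f : V → ℤ) (x y : V) :
    quadForm g f s(x, y) = (g x - g y) * (f x - f y) := rfl

lemma sym2_exists (z : Sym2 V) : ∃ x y, z = s(x, y) :=
  Sym2.ind (fun x y => ⟨x, y, rfl⟩) z

/-- The contribution of a single edge to a row of the Laplacian. -/
def lapE (z : Sym2 V) (v w : V) : ℤ :=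
  if w = v then (if v ∈ z then 1 else 0) else -(if z = s(v, w) then 1 else 0)

lemma lapRow_eq_sum (G : Multigraph V E) (v w : V) :
    G.lapRow v w = ∑ e : E, lapE (G.ends e) v w := by
  unfold Multigraph.lapRow lapE
  split_ifs with h
  · subst h
    unfold Multigraph.degree
    rw [Finset.card_filter]
    push_cast
    rfl
  · rw [Finset.card_filter]
    push_cast
    rw [Finset.sum_neg_distrib]

lemma perEdge (g f : V → ℤ) (x y : V) (hxy : x ≠ y) :
    ∑ w : V, ∑ v : V, g w * (f v * lapE s(x, y) v w) = (g x - g y) * (f x - f y) := by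
  have key : ∀ v w : V, lapE s(x, y) v w =
      (if x = v ∧ x = w then 1 else 0) + (if y = v ∧ y = w then 1 else 0)
      - (if x = v ∧ y = w then 1 else 0) - (if y = v ∧ x = w then 1 else 0) := by
    intro v w
    simp only [lapE, Sym2.mem_iff, Sym2.eq, Sym2.rel_iff']
    split_ifs <;> first | rfl | omega | aesop
  simp only [key, mul_add, mul_sub, mul_ite, mul_one, mul_zero, ite_and,
    Finset.sum_add_distrib, Finset.sum_sub_distrib, Finset.sum_ite_eq,
    Finset.mem_univ, if_true]
  ring

/-- The master "summation by parts" identity: the pairing of `g` against the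
Laplacian image of `f` is the sum over edges of the quadratic form. -/
lemma master (G : Multigraph V E) (g f : V → ℤ) :
    ∑ w, g w * (∑ v, f v • G.lapRow v) w = ∑ e, quadForm g f (G.ends e) := by
  have h1 : ∀ w, (∑ v, f v • G.lapRow v) w = ∑ v, f v * G.lapRow v w := by
    intro w
    rw [Finset.sum_apply]
    rfl
  calc ∑ w, g w * (∑ v, f v • G.lapRow v) w
      = ∑ w, ∑ v, ∑ e : E, g w * (f v * lapE (G.ends e) v w) := by
        simp only [h1, lapRow_eq_sum, Finset.mul_sum]
    _ = ∑ w, ∑ e : E, ∑ v, g w * (f v * lapE (G.ends e) v w) :=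
        Finset.sum_congr rfl (fun w _ => Finset.sum_comm)
    _ = ∑ e : E, ∑ w, ∑ v, g w * (f v * lapE (G.ends e) v w) := Finset.sum_comm
    _ = ∑ e, quadForm g f (G.ends e) := by
        refine Finset.sum_congr rfl (fun e _ => ?_)
        obtain ⟨x, y, hz⟩ := sym2_exists (G.ends e)
        have hxy : x ≠ y := by
          have := G.loopless e
          rw [hz, Sym2.mk_isDiag_iff] at this
          exact this
        rw [hz, quadForm_mk, perEdge g f x y hxy]

lemma sum_mul_delta (g : V → ℤ) (a : V) :
    ∑ w, g w * (if w = a then (1:ℤ) else 0) = g a := by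
  simp [mul_ite, Finset.sum_ite_eq']

end SandpileAux

/-- In a 2-connected multigraph with a vertex `s` of degree at
least 3, for any other vertex `c` the divisor `2(c - s)` is not firing
equivalent to zero; i.e. `[c - s]` does not have order dividing 2 in the
sandpile group. -/
theorem two_smul_chipDiv_ne_zero
    {V E : Type} [Fintype V] [Fintype E] [DecidableEq V] [DecidableEq E]
    (G : Multigraph V E) (h2 : G.TwoConnected)
    (s c : V) (hdeg : 3 ≤ G.degree s) (hcs : c ≠ s) :
    ¬ G.FiringEquiv (2 • chipDiv c s) 0 := by
  intro hfe
  -- Extract an integer vector f with ∑ f v • lapRow v = 2•(c-s)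
  have hmem : (2 • chipDiv c s : V → ℤ) ∈ AddSubgroup.closure (Set.range G.lapRow) := by
    have h := hfe
    unfold Multigraph.FiringEquiv Multigraph.LapSubgroup at h
    rwa [sub_zero] at h
  rw [← Submodule.span_int_eq_addSubgroupClosure, Submodule.mem_toAddSubgroup,
    Submodule.mem_span_range_iff_exists_fun] at hmem
  obtain ⟨f, hf⟩ := hmem
  -- The key weighted-sum identity
  have key : ∀ g : V → ℤ,
      ∑ e, SandpileAux.quadForm g f (G.ends e) = 2 * g c - 2 * g s := by
    intro g
    rw [← SandpileAux.master G g f, hf]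
    have hterm : ∀ w, g w * (2 • chipDiv c s : V → ℤ) w
        = 2 * (g w * (if w = c then 1 else 0)) - 2 * (g w * (if w = s then 1 else 0)) := by
      intro w
      simp only [Pi.smul_apply, chipDiv, nsmul_eq_mul, Nat.cast_ofNat]
      ring
    rw [Finset.sum_congr rfl (fun w _ => hterm w), Finset.sum_sub_distrib,
      ← Finset.mul_sum, ← Finset.mul_sum, SandpileAux.sum_mul_delta,
      SandpileAux.sum_mul_delta]
  -- the minimum value of f
  obtain ⟨v0, -, hv0⟩ := Finset.exists_min_image (univ : Finset V) f ⟨s, Finset.mem_univ s⟩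
  set m := f v0 with hm_def
  have hm : ∀ v, m ≤ f v := fun v => hv0 v (Finset.mem_univ v)
  set gS : V → ℤ := fun w => if f w = m then 1 else 0 with hgS
  have hpair : ∀ x y : V, (gS x - gS y) * (f x - f y) ≤ 0 := by
    intro x y
    have hx := hm x; have hy := hm y
    by_cases h1 : f x = m <;> by_cases h2 : f y = m <;>
      simp only [hgS, h1, h2, if_true, if_false] <;> nlinarith
  have hq0 : ∀ e : E, SandpileAux.quadForm gS f (G.ends e) ≤ 0 := by
    intro e
    obtain ⟨x, y, hz⟩ := SandpileAux.sym2_exists (G.ends e)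
    rw [hz, SandpileAux.quadForm_mk]
    exact hpair x y
  have hsum_q : ∑ e, SandpileAux.quadForm gS f (G.ends e) = 2 * gS c - 2 * gS s := key gS
  have hQ0 : 2 * gS c - 2 * gS s ≤ 0 := hsum_q ▸ Finset.sum_nonpos (fun e _ => hq0 e)
  -- if every edge term vanishes, f is constant
  have hall : (∀ e : E, SandpileAux.quadForm gS f (G.ends e) = 0) → ∀ b, f b = m := by
    intro h0 b
    have hreach := h2.1 v0 b
    induction hreach with
    | refl => rfl
    | @tail a b' hab hstep ih =>
      obtain ⟨e, he⟩ := hstep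
      by_contra hb
      have hne : SandpileAux.quadForm gS f (G.ends e) ≠ 0 := by
        rw [he, SandpileAux.quadForm_mk]
        have hb2 := hm b'
        simp only [hgS, ih, hb, if_true, if_false]
        intro hcontra
        norm_num at hcontra
        omega
      exact hne (h0 e)
  have hfs : f s = m := by
    by_contra hs0
    have hgs0 : gS s = 0 := by simp [hgS, hs0]
    have hgc0 : gS c = 0 := by
      by_cases h : f c = m
      · exfalso
        have : gS c = 1 := by simp [hgS, h]
        rw [hgs0, this] at hQ0
        omega
      · simp [hgS, h]
    have hz : ∑ e, SandpileAux.quadForm gS f (G.ends e) = 0 := by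
      rw [hsum_q, hgs0, hgc0]; ring
    have := hall (fun e =>
      ((Finset.sum_eq_zero_iff_of_nonpos (fun e _ => hq0 e)).mp hz) e (Finset.mem_univ e)) s
    exact hs0 this
  have hfc : f c ≠ m := by
    intro hc0
    have hgc1 : gS c = 1 := by simp [hgS, hc0]
    have hgs1 : gS s = 1 := by simp [hgS, hfs]
    have hz : ∑ e, SandpileAux.quadForm gS f (G.ends e) = 0 := by
      rw [hsum_q, hgc1, hgs1]; ring
    have hconst := hall (fun e =>
      ((Finset.sum_eq_zero_iff_of_nonpos (fun e _ => hq0 e)).mp hz) e (Finset.mem_univ e))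
    have h2c := key (fun w => if w = c then 1 else 0)
    have hzz : ∀ e : E,
        SandpileAux.quadForm (fun w => if w = c then (1:ℤ) else 0) f (G.ends e) = 0 := by
      intro e
      obtain ⟨x, y, hz'⟩ := SandpileAux.sym2_exists (G.ends e)
      rw [hz', SandpileAux.quadForm_mk, hconst x, hconst y]
      ring
    rw [Finset.sum_congr rfl (fun e _ => hzz e)] at h2c
    rw [Finset.sum_const_zero, if_pos rfl, if_neg (Ne.symm hcs)] at h2c
    omega
  have hgSs : gS s = 1 := by simp [hgS, hfs]
  have hgSc : gS c = 0 := by simp [hgS, hfc]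
  have hsum_q2 : ∑ e, SandpileAux.quadForm gS f (G.ends e) = -2 := by
    rw [hsum_q, hgSs, hgSc]; ring
  -- comparison with the delta function at s
  set gs : V → ℤ := fun w => if w = s then 1 else 0 with hgs_def
  have hple : ∀ e : E,
      SandpileAux.quadForm gS f (G.ends e) ≤ SandpileAux.quadForm gs f (G.ends e) := by
    intro e
    obtain ⟨x, y, hz⟩ := SandpileAux.sym2_exists (G.ends e)
    have hxy : x ≠ y := by
      have := G.loopless e
      rw [hz, Sym2.mk_isDiag_iff] at this
      exact this
    rw [hz, SandpileAux.quadForm_mk, SandpileAux.quadForm_mk]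
    have hx := hm x; have hy := hm y
    by_cases h1 : x = s <;> by_cases h2 : y = s
    · exact absurd (h1.trans h2.symm) hxy
    · subst h1
      simp only [hgS, hgs_def, hfs, if_true, if_pos rfl, if_neg h2]
      by_cases h3 : f y = m <;> simp only [h3, if_true, if_false] <;> nlinarith
    · subst h2
      simp only [hgS, hgs_def, hfs, if_true, if_pos rfl, if_neg h1]
      by_cases h3 : f x = m <;> simp only [h3, if_true, if_false] <;> nlinarith
    · simp only [hgs_def, if_neg h1, if_neg h2]
      have := hpair x y
      simpa using this
  have hsum_p : ∑ e, SandpileAux.quadForm gs f (G.ends e) = -2 := by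
    rw [key gs]
    simp [hgs_def, hcs]
  have hsq : ∑ e, (SandpileAux.quadForm gs f (G.ends e)
      - SandpileAux.quadForm gS f (G.ends e)) = 0 := by
    rw [Finset.sum_sub_distrib, hsum_p, hsum_q2]; ring
  have hqp : ∀ e : E,
      SandpileAux.quadForm gS f (G.ends e) = SandpileAux.quadForm gs f (G.ends e) := by
    intro e
    have := (Finset.sum_eq_zero_iff_of_nonneg
      (fun e _ => sub_nonneg.mpr (hple e))).mp hsq e (Finset.mem_univ e)
    omega
  -- every crossing edge is incident to s
  have hcross : ∀ e : E, SandpileAux.quadForm gS f (G.ends e) ≠ 0 → s ∈ G.ends e := by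
    intro e hne
    by_contra hs
    obtain ⟨x, y, hz⟩ := SandpileAux.sym2_exists (G.ends e)
    rw [hz, Sym2.mem_iff] at hs
    push_neg at hs
    rw [hqp e, hz, SandpileAux.quadForm_mk] at hne
    simp [hgs_def, Ne.symm hs.1, Ne.symm hs.2] at hne
  -- at most two crossing edges
  have hcard2 : (univ.filter fun e => SandpileAux.quadForm gS f (G.ends e) ≠ 0).card ≤ 2 := by
    set C := univ.filter fun e => SandpileAux.quadForm gS f (G.ends e) ≠ 0 with hC
    have h1 : ∑ e ∈ C, SandpileAux.quadForm gS f (G.ends e) = -2 := by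
      rw [hC, Finset.sum_filter_ne_zero, hsum_q2]
    have h2 : ∑ e ∈ C, SandpileAux.quadForm gS f (G.ends e) ≤ ∑ _e ∈ C, (-1 : ℤ) := by
      refine Finset.sum_le_sum (fun e he => ?_)
      rw [hC, Finset.mem_filter] at he
      have := hq0 e
      omega
    rw [Finset.sum_const, nsmul_eq_mul] at h2
    rw [h1] at h2
    omega
  -- find an edge at s with its other endpoint at the minimum level
  have hex : ∃ e : E, s ∈ G.ends e ∧ SandpileAux.quadForm gS f (G.ends e) = 0 := by
    by_contra hno
    push_neg at hno
    have hsub : (univ.filter fun e => s ∈ G.ends e)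
        ⊆ (univ.filter fun e => SandpileAux.quadForm gS f (G.ends e) ≠ 0) := by
      intro e he
      rw [Finset.mem_filter] at he ⊢
      exact ⟨he.1, hno e he.2⟩
    have hge : 3 ≤ (univ.filter fun e => s ∈ G.ends e).card := hdeg
    have h23 := le_trans hge (le_trans (Finset.card_le_card hsub) hcard2)
    omega
  obtain ⟨e0, hse0, hq00⟩ := hex
  obtain ⟨x, y, hz0⟩ := SandpileAux.sym2_exists (G.ends e0)
  have hxy0 : x ≠ y := by
    have := G.loopless e0
    rw [hz0, Sym2.mk_isDiag_iff] at this
    exact this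
  rw [hz0, Sym2.mem_iff] at hse0
  obtain ⟨u, hu_ne, hfu⟩ : ∃ u, u ≠ s ∧ f u = m := by
    rw [hz0, SandpileAux.quadForm_mk] at hq00
    rcases hse0 with h | h
    · subst h
      refine ⟨y, fun hy => hxy0 hy.symm, ?_⟩
      by_contra hy
      have hy2 := hm y
      simp only [hgS, hfs, if_pos rfl, hy, if_false] at hq00
      norm_num at hq00
      omega
    · subst h
      refine ⟨x, fun hx => hxy0 hx, ?_⟩
      by_contra hx
      have hx2 := hm x
      simp only [hgS, hfs, if_pos rfl, hx, if_false] at hq00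
      norm_num at hq00
      omega
  -- 2-connectivity: walk from u to c avoiding s stays at the minimum level
  have hreach := h2.2 s u c hu_ne hcs
  have hfinal : ∀ b, Relation.ReflTransGen (G.AdjAvoid s) u b → f b = m := by
    intro b hb
    induction hb with
    | refl => exact hfu
    | @tail a b' hab hstep ih =>
      by_contra hb'
      obtain ⟨⟨e', he'⟩, ha_ne, hb_ne⟩ := hstep
      have hne : SandpileAux.quadForm gS f (G.ends e') ≠ 0 := by
        rw [he', SandpileAux.quadForm_mk]
        have hb2 := hm b'
        simp only [hgS, ih, hb', if_true, if_false]
        intro hcontra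
        norm_num at hcontra
        omega
      have hmem := hcross e' hne
      rw [he', Sym2.mem_iff] at hmem
      rcases hmem with h | h
      · exact ha_ne h.symm
      · exact hb_ne h.symm
  exact hfc (hfinal c hreach)

end
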